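/- (Equidistribution of atoms.) Given ε > 0, let B be a polynomial factor defined by non-classical polynomials P_1,...,P_C : F_p^n → ℝ/ℤ of degree ≤ d and depths k_1,...,k_C, whose rank exceeds r(d,ε), where r(d,ε) is such that any degree-d non-classical polynomial of rank > r(d,ε) has |E_x[e(P(x))]| < ε. Then for any b = (b_1,...,b_C) ∈ U_{k_1+1} × ··· × U_{k_C+1}, Pr_x[(P_1(x),...,P_C(x)) = b] = 1/‖B‖ ± ε, where ‖B‖ = ∏_{i=1}^C p^{k_i+1}. -/

import Mathlib

open scoped BigOperators

noncomputable section

/-- The circle group `𝕋 = ℝ/ℤ`. -/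
abbrev 𝕋 : Type := AddCircle (1 : ℝ)

/-- The character `e(x) = e^{2πix}` on `𝕋`, valued in `ℂ`. -/
def ee (x : 𝕋) : ℂ := (AddCircle.toCircle x : ℂ)

/-- The average `E_{x ∈ α}[f(x)]` of a complex-valued function on a finite type. -/
def cavg {α : Type*} [Fintype α] (f : α → ℂ) : ℂ := (∑ x, f x) / (Fintype.card α : ℂ)

/-- The average of a real-valued function on a finite type. -/
def ravg {α : Type*} [Fintype α] (f : α → ℝ) : ℝ := (∑ x, f x) / (Fintype.card α : ℝ)

/-- Multiplicative derivative `Δ_h f (x) = f(x+h) conj (f x)`. -/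
def mDeriv {G : Type*} [Add G] (h : G) (f : G → ℂ) : G → ℂ :=
  fun x => f (x + h) * (starRingEnd ℂ) (f x)

/-- `E_{h_1,…,h_d,x}[(Δ_{h_1} ⋯ Δ_{h_d} f)(x)]`. -/
def gowersAvg {G : Type*} [AddCommGroup G] [Fintype G] : ℕ → (G → ℂ) → ℂ
  | 0, f => cavg f
  | d + 1, f => cavg fun h => gowersAvg d (mDeriv h f)

/-- The Gowers norm `‖f‖_{U^d} = |E_{h_1,…,h_d,x}[(Δ_{h_1} ⋯ Δ_{h_d} f)(x)]|^{1/2^d}`. -/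
def gowersNorm {G : Type*} [AddCommGroup G] [Fintype G] (d : ℕ) (f : G → ℂ) : ℝ :=
  ‖gowersAvg d f‖ ^ ((1 : ℝ) / 2 ^ d)

/-- Additive derivative `D_h P (x) = P(x+h) - P(x)`. -/
def aDeriv {G M : Type*} [Add G] [Sub M] (h : G) (P : G → M) : G → M :=
  fun x => P (x + h) - P x

/-- Iterated additive derivative `D_{h_1} ⋯ D_{h_k} P`. -/
def iterADeriv {G M : Type*} [AddCommGroup G] [AddCommGroup M] :
    {k : ℕ} → (Fin k → G) → (G → M) → (G → M)
  | 0, _, P => P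
  | _ + 1, h, P => aDeriv (h 0) (iterADeriv (Fin.tail h) P)

/-- `P` is a (non-classical) polynomial of degree ≤ `d`:
all `(d+1)`-fold additive derivatives vanish identically. -/
def IsPolyDeg {G M : Type*} [AddCommGroup G] [AddCommGroup M] (d : ℕ) (P : G → M) : Prop :=
  ∀ (h : Fin (d + 1) → G) (x : G), iterADeriv h P x = 0

/-- `P` has degree exactly `d`. -/
def ExactDeg {G M : Type*} [AddCommGroup G] [AddCommGroup M] (d : ℕ) (P : G → M) : Prop :=
  IsPolyDeg d P ∧ ∀ d' < d, ¬ IsPolyDeg d' P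

/-- The degree of a polynomial: the least `d` with `IsPolyDeg d P`. -/
def polyDeg {G M : Type*} [AddCommGroup G] [AddCommGroup M] (P : G → M) : ℕ :=
  sInf {d | IsPolyDeg d P}

/-- `P` has `d`-rank at most `r`: `P = Γ(Q_1,…,Q_r)` with the `Q_i` of degree ≤ `d-1`. -/
def HasRankLE {G : Type*} [AddCommGroup G] (d : ℕ) (P : G → 𝕋) (r : ℕ) : Prop :=
  ∃ (Q : Fin r → G → 𝕋) (Γ : (Fin r → 𝕋) → 𝕋),
    (∀ i, IsPolyDeg (d - 1) (Q i)) ∧ ∀ x, P x = Γ fun i => Q i x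

/-- The `d`-rank of `P`, in `ℕ∞` (`⊤` if no finite decomposition exists;
for `d = 1` this is `⊤` exactly when `P` is non-constant). -/
def rankd {G : Type*} [AddCommGroup G] (d : ℕ) (P : G → 𝕋) : ℕ∞ :=
  sInf {r : ℕ∞ | ∃ m : ℕ, r = m ∧ HasRankLE d P m}

/-- `P` has depth exactly `k` (shift zero): values in `U_{k+1} = (1/p^{k+1})ℤ/ℤ` but not all
in `U_k`. -/
def ExactDepth {G : Type*} (p k : ℕ) (P : G → 𝕋) : Prop :=
  (∀ x, (p ^ (k + 1)) • P x = 0) ∧ ¬ (∀ x, (p ^ k) • P x = 0)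

/-- Application of a linear form `L = (w_t)_t` to a tuple of points of `F_p^n`:
`(x_t)_t ↦ ∑_t w_t x_t`. -/
def formApply {p : ℕ} {ι : Type*} [Fintype ι] {n : ℕ} (L : ι → ZMod p)
    (x : ι → Fin n → ZMod p) : Fin n → ZMod p := ∑ t, L t • x t

/-- The `(d,k)`-dependency set of a system of forms `L`: the tuples
`(λ_j) ∈ [0, p^{k+1}-1]^m` with `∑_j λ_j P(L_j(x)) ≡ 0` for every non-classical polynomial `P`
of degree `d` and depth `k` (over every `F_p^n`). -/
def DepSet (p k d : ℕ) {ι μ : Type*} [Fintype ι] [Fintype μ]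
    (L : μ → ι → ZMod p) : Set (μ → ℕ) :=
  {lam | (∀ j, lam j < p ^ (k + 1)) ∧
    ∀ (n : ℕ) (P : (Fin n → ZMod p) → 𝕋), ExactDeg d P → ExactDepth p k P →
      ∀ x : ι → Fin n → ZMod p, (∑ j, lam j • P (formApply (L j) x)) = 0}

/-- `b_1,…,b_m ∈ 𝕋^κ` are consistent with the forms `L` with respect to degree data `dd`
and depth data `kk`. -/
def ConsistentWith (p : ℕ) {ι κ : Type*} [Fintype ι] [Fintype κ] {m : ℕ}
    (L : Fin m → ι → ZMod p) (dd kk : κ → ℕ) (b : Fin m → κ → 𝕋) : Prop :=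
  ∀ i : κ, (∀ j, (p ^ (kk i + 1)) • b j i = 0) ∧
    ∀ lam ∈ DepSet p (kk i) (dd i) L, (∑ j, lam j • b j i) = 0

/-- The polynomial factor defined by `P_1,…,P_C` with depths `k_1,…,k_C` has rank greater
than `r`: every integer combination `∑ λ_i P_i`, with the `λ_i` not all divisible by the
respective `p^{k_i+1}`, has `D`-rank > `r` where `D = max_i deg(λ_i P_i)`. -/
def FactorRankGT (p : ℕ) {G : Type*} [AddCommGroup G] {C : ℕ}
    (P : Fin C → G → 𝕋) (k : Fin C → ℕ) (r : ℕ) : Prop :=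
  ∀ lam : Fin C → ℤ, (∃ i, ¬ ((p : ℤ) ^ (k i + 1) ∣ lam i)) →
    (r : ℕ∞) < rankd (Finset.univ.sup fun i => polyDeg fun x => lam i • P i x)
      (fun x => ∑ i, lam i • P i x)

/-- Cauchy–Schwarz complexity ≤ `d`: for each `i`, the remaining forms can be partitioned into
`d+1` classes, with `L_i` outside the linear span of each class. -/
def CSComplexityLE (p : ℕ) {m : ℕ} {ι : Type*} [Fintype ι] (d : ℕ)
    (L : Fin m → ι → ZMod p) : Prop :=
  ∀ i, ∃ c : Fin m → Fin (d + 1), ∀ t,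
    L i ∉ Submodule.span (ZMod p) {v | ∃ j, j ≠ i ∧ c j = t ∧ v = L j}


/-! ### Auxiliary lemmas -/

lemma ee_add' (x y : 𝕋) : ee (x + y) = ee x * ee y := by
  simp [ee, AddCircle.toCircle_add]

lemma ee_zero' : ee 0 = 1 := by simp [ee]

lemma ee_abs' (x : 𝕋) : ‖ee x‖ = 1 := Circle.norm_coe _

lemma ee_nsmul' (m : ℕ) (t : 𝕋) : ee (m • t) = ee t ^ m := by
  induction m with
  | zero => simp [ee_zero']
  | succ m ih => rw [succ_nsmul, ee_add', ih, pow_succ]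

lemma ee_inj' {x y : 𝕋} (h : ee x = ee y) : x = y := by
  have := AddCircle.injective_toCircle (T := (1:ℝ)) one_ne_zero
  exact this (Circle.coe_injective h)

lemma ee_sum' {ι : Type*} (s : Finset ι) (f : ι → 𝕋) :
    ee (∑ i ∈ s, f i) = ∏ i ∈ s, ee (f i) := by
  classical
  induction s using Finset.cons_induction with
  | empty => simp [ee_zero']
  | cons i s hi ih => rw [Finset.sum_cons, Finset.prod_cons, ee_add', ih]

lemma sum_char' (N : ℕ) (t : 𝕋) (ht : N • t = 0) :
    ∑ l ∈ Finset.range N, ee (l • t) = if t = 0 then (N : ℂ) else 0 := by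
  simp_rw [ee_nsmul']
  by_cases h : t = 0
  · simp [h, ee_zero']
  · rw [if_neg h]
    have hz1 : ee t ≠ 1 := fun he => h (ee_inj' (he.trans ee_zero'.symm))
    have hzN : ee t ^ N = 1 := by rw [← ee_nsmul', ht, ee_zero']
    rw [geom_sum_eq hz1, hzN, sub_self, zero_div]

section Poly

variable {G M : Type*} [AddCommGroup G] [AddCommGroup M]

lemma iterADeriv_zero_fun {m : ℕ} (h : Fin m → G) (x : G) :
    iterADeriv h (fun _ => (0 : M)) x = 0 := by
  induction m generalizing x with
  | zero => rfl
  | succ m ih =>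
    show aDeriv (h 0) (iterADeriv (Fin.tail h) fun _ => (0:M)) x = 0
    simp [aDeriv, ih]

lemma iterADeriv_add_fun {m : ℕ} (h : Fin m → G) (P Q : G → M) (x : G) :
    iterADeriv h (fun y => P y + Q y) x = iterADeriv h P x + iterADeriv h Q x := by
  induction m generalizing P Q x with
  | zero => rfl
  | succ m ih =>
    show aDeriv (h 0) (iterADeriv (Fin.tail h) fun y => P y + Q y) x = _
    have hP : iterADeriv (Fin.tail h) (fun y => P y + Q y)
        = fun y => iterADeriv (Fin.tail h) P y + iterADeriv (Fin.tail h) Q y := by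
      funext y; exact ih (Fin.tail h) P Q y
    rw [hP]
    show (iterADeriv (Fin.tail h) P (x + h 0) + iterADeriv (Fin.tail h) Q (x + h 0))
        - (iterADeriv (Fin.tail h) P x + iterADeriv (Fin.tail h) Q x) = _
    show _ = aDeriv (h 0) (iterADeriv (Fin.tail h) P) x
        + aDeriv (h 0) (iterADeriv (Fin.tail h) Q) x
    simp [aDeriv]; abel

lemma iterADeriv_zsmul_fun {m : ℕ} (h : Fin m → G) (a : ℤ) (P : G → M) (x : G) :
    iterADeriv h (fun y => a • P y) x = a • iterADeriv h P x := by
  induction m generalizing x with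
  | zero => rfl
  | succ m ih =>
    show aDeriv (h 0) (iterADeriv (Fin.tail h) fun y => a • P y) x = _
    have hP : iterADeriv (Fin.tail h) (fun y => a • P y)
        = fun y => a • iterADeriv (Fin.tail h) P y := by
      funext y; exact ih (Fin.tail h) y
    rw [hP]
    show a • iterADeriv (Fin.tail h) P (x + h 0) - a • iterADeriv (Fin.tail h) P x = _
    show _ = a • aDeriv (h 0) (iterADeriv (Fin.tail h) P) x
    simp [aDeriv, smul_sub]

lemma isPolyDeg_succ {d : ℕ} {P : G → M} (hP : IsPolyDeg d P) : IsPolyDeg (d + 1) P := by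
  intro h x
  show aDeriv (h 0) (iterADeriv (Fin.tail h) P) x = 0
  unfold aDeriv
  rw [hP (Fin.tail h), hP (Fin.tail h), sub_self]

lemma isPolyDeg_mono {d d' : ℕ} (hdd : d ≤ d') {P : G → M} (hP : IsPolyDeg d P) :
    IsPolyDeg d' P := by
  induction d' with
  | zero => exact (Nat.le_zero.mp hdd) ▸ hP
  | succ d' ih =>
    rcases Nat.lt_or_ge d (d' + 1) with h | h
    · exact isPolyDeg_succ (ih (Nat.lt_succ_iff.mp h))
    · exact (Nat.le_antisymm hdd h) ▸ hP

lemma isPolyDeg_zsmul {d : ℕ} (a : ℤ) {P : G → M} (hP : IsPolyDeg d P) :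
    IsPolyDeg d (fun x => a • P x) := by
  intro h x
  rw [iterADeriv_zsmul_fun, hP, smul_zero]

lemma isPolyDeg_sum {d : ℕ} {ι : Type*} (s : Finset ι) (f : ι → G → M)
    (hf : ∀ i ∈ s, IsPolyDeg d (f i)) :
    IsPolyDeg d (fun x => ∑ i ∈ s, f i x) := by
  classical
  induction s using Finset.cons_induction with
  | empty => intro h x; simp only [Finset.sum_empty]; exact iterADeriv_zero_fun h x
  | cons i s hi ih =>
    intro h x
    simp only [Finset.sum_cons]
    rw [iterADeriv_add_fun]
    rw [hf i (Finset.mem_cons_self i s) h x,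
      ih (fun j hj => hf j (Finset.mem_cons_of_mem hj)) h x, add_zero]

lemma polyDeg_le {d : ℕ} {P : G → M} (hP : IsPolyDeg d P) : polyDeg P ≤ d :=
  Nat.sInf_le hP

lemma isPolyDeg_polyDeg {d : ℕ} {P : G → M} (hP : IsPolyDeg d P) :
    IsPolyDeg (polyDeg P) P :=
  Nat.sInf_mem (⟨d, hP⟩ : {d | IsPolyDeg d P}.Nonempty)

end Poly

lemma hasRankLE_mono {G : Type*} [AddCommGroup G] {d d' : ℕ} (hdd : d ≤ d')
    {P : G → 𝕋} {r : ℕ} (h : HasRankLE d P r) : HasRankLE d' P r := by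
  obtain ⟨Q, Γ, hQ, hPQ⟩ := h
  exact ⟨Q, Γ, fun i => isPolyDeg_mono (Nat.sub_le_sub_right hdd 1) (hQ i), hPQ⟩

lemma rankd_antitone {G : Type*} [AddCommGroup G] {d d' : ℕ} (hdd : d ≤ d')
    (P : G → 𝕋) : rankd d' P ≤ rankd d P := by
  apply sInf_le_sInf
  rintro r ⟨m, rfl, hm⟩
  exact ⟨m, rfl, hasRankLE_mono hdd hm⟩
set_option maxHeartbeats 1000000 in
/-- Equidistribution of atoms: if the factor `(P_1,…,P_C)` of degree ≤ d and
depths `k_i` has rank > `rε`, where `rε` has the bias-implies-low-rank property, then every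
atom `b` with `b_i ∈ U_{k_i+1}` satisfies `Pr_x[(P_i(x)) = b] = 1/‖B‖ ± ε`. -/
theorem atom_equidistribution (p : ℕ) [Fact p.Prime] (n C d : ℕ)
    (ε : ℝ) (hε : 0 < ε) (rε : ℕ)
    (P : Fin C → (Fin n → ZMod p) → 𝕋) (k : Fin C → ℕ)
    (hdeg : ∀ i, IsPolyDeg d (P i))
    (hdepth : ∀ i x, (p ^ (k i + 1)) • P i x = 0)
    (hbias : ∀ Q : (Fin n → ZMod p) → 𝕋, IsPolyDeg d Q →
      (rε : ℕ∞) < rankd (polyDeg Q) Q →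
      ‖cavg fun x => ee (Q x)‖ < ε)
    (hrank : FactorRankGT p P k rε)
    (b : Fin C → 𝕋) (hb : ∀ i, (p ^ (k i + 1)) • b i = 0) :
    |(Nat.card {x : Fin n → ZMod p // ∀ i, P i x = b i} : ℝ) /
        (Fintype.card (Fin n → ZMod p) : ℝ)
      - 1 / ∏ i, (p : ℝ) ^ (k i + 1)| ≤ ε := by
  classical
  have hp : 0 < p := (Fact.out : p.Prime).pos
  set N : Fin C → ℕ := fun i => p ^ (k i + 1) with hN
  set B : ℕ := ∏ i, N i with hB
  have hNpos : ∀ i, 0 < N i := fun i => pow_pos hp _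
  have hBpos : 0 < B := Finset.prod_pos fun i _ => hNpos i
  set q : ℕ := Fintype.card (Fin n → ZMod p) with hq
  have hqpos : 0 < q := Fintype.card_pos
  set Λ : Finset (Fin C → ℕ) := Fintype.piFinset fun i => Finset.range (N i) with hΛ
  set card : ℕ := Nat.card {x : (Fin n → ZMod p) // ∀ i, P i x = b i} with hcard
  -- per-x Fourier identity
  have key : ∀ x : (Fin n → ZMod p), ∑ lam ∈ Λ, ee (∑ i, (lam i) • (P i x - b i))
      = if (∀ i, P i x = b i) then (B : ℂ) else 0 := by
    intro x
    calc ∑ lam ∈ Λ, ee (∑ i, lam i • (P i x - b i))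
        = ∑ lam ∈ Λ, ∏ i, ee (lam i • (P i x - b i)) :=
          Finset.sum_congr rfl fun lam _ => ee_sum' _ _
      _ = ∏ i, ∑ l ∈ Finset.range (N i), ee (l • (P i x - b i)) :=
          (Finset.prod_univ_sum (fun i => Finset.range (N i)) (fun i l => ee (l • (P i x - b i)))).symm
      _ = ∏ i, (if P i x = b i then (N i : ℂ) else 0) := by
          refine Finset.prod_congr rfl fun i _ => ?_
          rw [sum_char' (N i) _ (by rw [smul_sub, hdepth, hb, sub_zero])]
          simp [sub_eq_zero]
      _ = if (∀ i, P i x = b i) then (B : ℂ) else 0 := by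
          by_cases hx : ∀ i, P i x = b i
          · rw [if_pos hx, hB]
            push_cast
            exact Finset.prod_congr rfl fun i _ => by rw [if_pos (hx i)]
          · rw [if_neg hx]
            obtain ⟨i, hi⟩ := not_forall.mp hx
            exact Finset.prod_eq_zero (Finset.mem_univ i) (if_neg hi)
  -- counting identity
  have count : ∑ x : (Fin n → ZMod p), (if (∀ i, P i x = b i) then (B : ℂ) else 0)
      = (card : ℂ) * B := by
    rw [← Finset.sum_filter, Finset.sum_const, nsmul_eq_mul, hcard,
      Nat.card_eq_fintype_card, Fintype.card_subtype]
  have h0mem : (0 : Fin C → ℕ) ∈ Λ := by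
    simp only [hΛ, Fintype.mem_piFinset]
    intro i
    simpa using hNpos i
  have zeroterm : ∑ x : (Fin n → ZMod p), ee (∑ i, ((0 : Fin C → ℕ) i) • (P i x - b i)) = (q : ℂ) := by
    simp [ee_zero', hq]
  have main : (card : ℂ) * B - q
      = ∑ lam ∈ Λ.erase 0, ∑ x : (Fin n → ZMod p), ee (∑ i, lam i • (P i x - b i)) := by
    have swap : ∑ x : (Fin n → ZMod p), ∑ lam ∈ Λ, ee (∑ i, lam i • (P i x - b i))
        = ∑ lam ∈ Λ, ∑ x : (Fin n → ZMod p), ee (∑ i, lam i • (P i x - b i)) := Finset.sum_comm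
    have hx2 : ∑ x : (Fin n → ZMod p), ∑ lam ∈ Λ, ee (∑ i, lam i • (P i x - b i)) = (card : ℂ) * B := by
      rw [Finset.sum_congr rfl fun x _ => key x, count]
    have htot := swap.symm.trans hx2
    rw [← Finset.add_sum_erase Λ
      (fun lam => ∑ x : (Fin n → ZMod p), ee (∑ i, lam i • (P i x - b i))) h0mem] at htot
    simp only [zeroterm] at htot
    linear_combination -htot
  -- bound each nonzero term
  have bound : ∀ lam ∈ Λ.erase 0,
      ‖∑ x : (Fin n → ZMod p), ee (∑ i, lam i • (P i x - b i))‖ ≤ ε * q := by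
    intro lam hlam
    obtain ⟨hne, hmem⟩ := Finset.mem_erase.mp hlam
    set lam' : Fin C → ℤ := fun i => (lam i : ℤ) with hlam'
    set Q : (Fin n → ZMod p) → 𝕋 := fun x => ∑ i, lam' i • P i x with hQ
    have hrw : ∀ x : (Fin n → ZMod p), ee (∑ i, lam i • (P i x - b i))
        = ee (Q x) * ee (- ∑ i, lam i • b i) := by
      intro x
      rw [← ee_add']
      congr 1
      rw [hQ]
      simp only [smul_sub, Finset.sum_sub_distrib, natCast_zsmul, hlam']
      abel
    have hdvd : ∃ i, ¬ ((p : ℤ) ^ (k i + 1) ∣ lam' i) := by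
      obtain ⟨i, hi⟩ := Function.ne_iff.mp hne
      refine ⟨i, fun hd => ?_⟩
      have hlt : lam i < N i := by
        have := Fintype.mem_piFinset.mp hmem i
        simpa using this
      have hpos : (0 : ℤ) < lam' i := by
        simp only [hlam']
        exact_mod_cast Nat.pos_of_ne_zero (by simpa using hi)
      have hle := Int.le_of_dvd hpos hd
      simp only [hlam'] at hle
      have h2 : N i ≤ lam i := by
        rw [hN]
        exact_mod_cast hle
      omega
    have hQd : IsPolyDeg d Q := by
      rw [hQ]
      exact isPolyDeg_sum Finset.univ _ fun i _ => isPolyDeg_zsmul _ (hdeg i)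
    have hrk := hrank lam' hdvd
    set D := Finset.univ.sup fun i => polyDeg fun x : (Fin n → ZMod p) => lam' i • P i x with hD
    have hQD : IsPolyDeg D Q := by
      rw [hQ]
      refine isPolyDeg_sum Finset.univ _ fun i _ => ?_
      exact isPolyDeg_mono (Finset.le_sup (Finset.mem_univ i))
        (isPolyDeg_polyDeg (isPolyDeg_zsmul _ (hdeg i)))
    have hrk2 : (rε : ℕ∞) < rankd (polyDeg Q) Q :=
      lt_of_lt_of_le hrk (rankd_antitone (polyDeg_le hQD) Q)
    have hb2 := hbias Q hQd hrk2
    have hsum : ∑ x : (Fin n → ZMod p), ee (∑ i, lam i • (P i x - b i))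
        = (∑ x : (Fin n → ZMod p), ee (Q x)) * ee (- ∑ i, lam i • b i) := by
      rw [Finset.sum_congr rfl fun x _ => hrw x, ← Finset.sum_mul]
    rw [hsum, norm_mul, ee_abs', mul_one]
    have hqC : ((Fintype.card (Fin n → ZMod p) : ℂ)) ≠ 0 := by
      exact_mod_cast (Fintype.card_pos (α := Fin n → ZMod p)).ne'
    have h3 : (∑ x : Fin n → ZMod p, ee (Q x))
        = cavg (fun x => ee (Q x)) * ((Fintype.card (Fin n → ZMod p) : ℂ)) := by
      rw [cavg]
      exact (div_mul_cancel₀ _ hqC).symm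
    rw [h3, norm_mul, Complex.norm_natCast, hq]
    exact mul_le_mul_of_nonneg_right hb2.le (by positivity)
  -- assemble
  have hcardΛ : Λ.card = B := by
    rw [hΛ, Fintype.card_piFinset]
    simp [hB, hN]
  have habs : ‖(card : ℂ) * B - q‖ ≤ ε * (B * q) := by
    rw [main]
    refine le_trans (norm_sum_le _ _) ?_
    refine le_trans (Finset.sum_le_card_nsmul _ _ (ε * q) bound) ?_
    rw [nsmul_eq_mul]
    have hcle : ((Λ.erase 0).card : ℝ) ≤ (B : ℝ) := by
      have := Finset.card_erase_le (a := (0 : Fin C → ℕ)) (s := Λ)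
      rw [hcardΛ] at *
      exact_mod_cast le_trans this (le_of_eq hcardΛ)
    calc ((Λ.erase 0).card : ℝ) * (ε * q) ≤ (B : ℝ) * (ε * q) := by
          apply mul_le_mul_of_nonneg_right hcle (by positivity)
      _ = ε * (B * q) := by ring
  have hprod : ∏ i, (p : ℝ) ^ (k i + 1) = (B : ℝ) := by
    rw [hB, Nat.cast_prod]
    refine Finset.prod_congr rfl fun i _ => ?_
    rw [hN]
    push_cast
    ring
  rw [hprod]
  have hBne : (B : ℝ) ≠ 0 := by exact_mod_cast hBpos.ne'
  have hqne : (q : ℝ) ≠ 0 := by exact_mod_cast hqpos.ne'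
  have hgoal : ((card : ℝ) / q - 1 / B) = ((card : ℝ) * B - q) / (B * q) := by
    rw [div_sub_div _ _ hqne hBne, mul_one, mul_comm (q : ℝ) (B : ℝ)]
  rw [show (Fintype.card (Fin n → ZMod p) : ℝ) = (q : ℝ) from rfl, hgoal, abs_div]
  rw [abs_of_pos (by positivity : (0:ℝ) < (B:ℝ) * q)]
  rw [div_le_iff₀ (by positivity)]
  have : |(card : ℝ) * B - q| = ‖(card : ℂ) * B - q‖ := by
    rw [← Real.norm_eq_abs, ← Complex.norm_real]
    congr 1
    push_cast
    ring
  rw [this]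
  exact habs

end
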